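/- Let X be a finite metric space with a linear order on its points, and let ≤ be the lexicographically refined Vietoris–Rips order on the nonempty subsets of X. (i) If τ is a cofacet of σ with diam τ = diam σ, then τ is the minimum, with respect to ≤, among all cofacets of σ if and only if τ is the colexicographically greatest among the cofacets of σ having diameter equal to diam σ. (ii) If σ is a facet of τ with diam σ = diam τ, then σ is the maximum, with respect to ≤, among all facets of τ if and only if σ is the colexicographically least among the facets of τ having diameter equal to diam τ. -/

import Mathlib

/-- The diameter of a finite subset of a metric space. -/
noncomputable def fdiam {X : Type*} [MetricSpace X] (S : Finset X) : ℝ :=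
  Metric.diam (S : Set X)

/-- The lexicographically refined Vietoris–Rips order on subsets of a finite
linearly ordered metric space: by diameter, then by dimension (cardinality),
then by reverse colexicographic vertex order. -/
def ripsLe {X : Type*} [MetricSpace X] [LinearOrder X] (σ τ : Finset X) : Prop :=
  σ = τ ∨ fdiam σ < fdiam τ ∨ (fdiam σ = fdiam τ ∧ (σ.card < τ.card ∨
    (σ.card = τ.card ∧ toColex τ < toColex σ)))

lemma fdiam_mono {X : Type*} [MetricSpace X] {s t : Finset X} (h : s ⊆ t) :
    fdiam s ≤ fdiam t :=
  Metric.diam_mono (Finset.coe_subset.mpr h) (t.finite_toSet.isBounded)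

/-- (i) A cofacet `τ` of `σ` with `diam τ = diam σ` is the minimum cofacet of
`σ` in the lexicographically refined Vietoris–Rips order iff it is the
colexicographically greatest cofacet of `σ` with diameter `diam σ`.
(ii) A facet `σ` of `τ` with `diam σ = diam τ` is the maximum facet of `τ` in
that order iff it is the colexicographically least facet of `τ` with diameter
`diam τ`. -/
theorem stmt9 {X : Type*} [Fintype X] [MetricSpace X] [LinearOrder X] :
    (∀ σ τ : Finset X, σ.Nonempty → σ ⊆ τ → τ.card = σ.card + 1 →
      fdiam τ = fdiam σ →
      ((∀ τ' : Finset X, σ ⊆ τ' → τ'.card = σ.card + 1 → ripsLe τ τ') ↔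
       (∀ τ' : Finset X, σ ⊆ τ' → τ'.card = σ.card + 1 → fdiam τ' = fdiam σ →
          toColex τ' ≤ toColex τ))) ∧
    (∀ σ τ : Finset X, σ.Nonempty → σ ⊆ τ → τ.card = σ.card + 1 →
      fdiam σ = fdiam τ →
      ((∀ σ' : Finset X, σ'.Nonempty → σ' ⊆ τ → τ.card = σ'.card + 1 → ripsLe σ' σ) ↔
       (∀ σ' : Finset X, σ'.Nonempty → σ' ⊆ τ → τ.card = σ'.card + 1 →
          fdiam σ' = fdiam τ →
          toColex σ ≤ toColex σ'))) := by
  constructor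
  · intro σ τ hσ hστ hcard hd
    constructor
    · intro hmin τ' hsub hc hd'
      rcases hmin τ' hsub hc with rfl | hlt | ⟨_, hc' | ⟨_, hcolex⟩⟩
      · exact le_refl _
      · rw [hd, hd'] at hlt; exact absurd hlt (lt_irrefl _)
      · omega
      · exact le_of_lt hcolex
    · intro hmax τ' hsub hc
      have hle : fdiam σ ≤ fdiam τ' := fdiam_mono hsub
      rcases lt_or_eq_of_le hle with hlt | heq
      · exact Or.inr (Or.inl (by rw [hd]; exact hlt))
      · have := hmax τ' hsub hc heq.symm
        rcases lt_or_eq_of_le this with hlt | heq2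
        · exact Or.inr (Or.inr ⟨by rw [hd, heq], Or.inr ⟨by omega, hlt⟩⟩)
        · exact Or.inl (by
            have : τ' = τ := by
              have := congrArg ofColex heq2
              simpa using this
            exact this.symm)
  · intro σ τ hσ hστ hcard hd
    constructor
    · intro hmax σ' hσ' hsub hc hd'
      rcases hmax σ' hσ' hsub hc with h | hlt | ⟨_, hc' | ⟨_, hcolex⟩⟩
      · exact le_of_eq (by rw [h])
      · rw [hd', hd] at hlt; exact absurd hlt (lt_irrefl _)
      · omega
      · exact le_of_lt hcolex
    · intro hmin σ' hσ' hsub hc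
      have hle : fdiam σ' ≤ fdiam τ := fdiam_mono hsub
      rcases lt_or_eq_of_le hle with hlt | heq
      · exact Or.inr (Or.inl (by rw [← hd] at hlt; exact hlt))
      · have := hmin σ' hσ' hsub hc heq
        rcases lt_or_eq_of_le this with hlt | heq2
        · exact Or.inr (Or.inr ⟨by rw [hd, heq], Or.inr ⟨by omega, hlt⟩⟩)
        · exact Or.inl (by
            have := congrArg ofColex heq2
            simpa using this.symm)
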